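/- Let (Ω, d) be a compact metric space with covering number ν_Ω(r) for each radius r, fix N ∈ ℕ and 1 ≤ p < ∞, and let X be the set of weighted point sets over Ω with at most N points, equipped with the p-Wasserstein metric W_p. Let f : X × X → ℝ be uniformly continuous (with respect to the sum metric W_p(A,A') + W_p(B,B')) and symmetric, i.e. f(A,B) = f(B,A). Then for every ε > 0 there exist δ > 0, a = a(δ) equal to the relevant covering number of Ω, a' = 4a + 1, and continuous functions h : Ω → ℝ^a, φ : ℝ^a → ℝ^{a'}, ρ : ℝ^{a'} → ℝ such that |f(A,B) − ρ(φ(Σ_{(x,w)∈A} w·h(x)) + φ(Σ_{(x,w)∈B} w·h(x)))| < ε for all A, B ∈ X. -/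

import Mathlib

/-- A weighted point set: a finite indexed family of points together with weights. -/
structure WPS (Ω : Type*) where
  n : ℕ
  pts : Fin n → Ω
  w : Fin n → ℝ

namespace WPS

/-- The weights are nonnegative and sum to one. -/
def IsWeighted {Ω : Type*} (S : WPS Ω) : Prop :=
  (∀ i, 0 ≤ S.w i) ∧ (∑ i, S.w i) = 1

/-- The `p`-Wasserstein distance between two weighted point sets: the infimum, over
nonnegative coupling matrices `T` with row sums the weights of `P` and column sums the
weights of `Q`, of `(∑ i j, T i j * d(P i, Q j)^p)^(1/p)`. -/
noncomputable def Wp {Ω : Type*} [MetricSpace Ω] (p : ℝ) (P Q : WPS Ω) : ℝ :=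
  sInf { c : ℝ | ∃ T : Fin P.n → Fin Q.n → ℝ,
    (∀ i j, 0 ≤ T i j) ∧
    (∀ i, (∑ j, T i j) = P.w i) ∧
    (∀ j, (∑ i, T i j) = Q.w j) ∧
    c = (∑ i, ∑ j, T i j * dist (P.pts i) (Q.pts j) ^ p) ^ (1 / p) }

end WPS


/-- The covering number `ν_Ω(r)`: the minimal number of balls of radius `r` needed to
cover `Ω`. -/
noncomputable def coveringNumber (Ω : Type*) [MetricSpace Ω] (r : ℝ) : ℕ :=
  sInf { a : ℕ | ∃ c : Fin a → Ω, ∀ x : Ω, ∃ i, dist x (c i) < r }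


namespace WassAux

lemma pair_aux {x y x' y' : ℝ} (hs : x + y = x' + y') (hq : x^2 + y^2 = x'^2 + y'^2) :
    (x = x' ∧ y = y') ∨ (x = y' ∧ y = x') := by
  have h0 : (x - x') * (x - y') = 0 := by
    linear_combination (x - y - x' - y')/2 * hs + hq/2
  rcases mul_eq_zero.mp h0 with h | h
  · left
    have hx : x = x' := by linarith [sub_eq_zero.mp h]
    exact ⟨hx, by linarith⟩
  · right
    have hx : x = y' := by linarith [sub_eq_zero.mp h]
    exact ⟨hx, by linarith⟩

noncomputable def Lfun (a : ℕ) (k : ℕ) (u : Fin a → ℝ) : ℝ :=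
  ∑ i : Fin a, ((k : ℝ) + 2) ^ (i : ℕ) * u i

noncomputable def phiFun (a : ℕ) (u : Fin a → ℝ) : Fin (4*a+1) → ℝ := fun j =>
  if (j : ℕ) < 2*a - 1 then Lfun a (j : ℕ) u
  else if (j : ℕ) < 2*(2*a - 1) then (Lfun a ((j : ℕ) - (2*a - 1)) u)^2 else 0

lemma Lfun_continuous (a k : ℕ) : Continuous (Lfun a k) := by
  unfold Lfun
  exact continuous_finset_sum _ (fun i _ => continuous_const.mul (continuous_apply i))

lemma phiFun_continuous (a : ℕ) : Continuous (phiFun a) := by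
  apply continuous_pi
  intro j
  unfold phiFun
  by_cases h1 : (j : ℕ) < 2*a - 1
  · simpa [h1] using Lfun_continuous a (j : ℕ)
  · by_cases h2 : (j : ℕ) < 2*(2*a - 1)
    · simp only [h1, h2, ↓reduceIte]
      exact Continuous.pow (Lfun_continuous a ((j : ℕ) - (2*a-1))) 2
    · simpa [h1, h2] using (continuous_const : Continuous fun _ : Fin a → ℝ => (0:ℝ))

lemma Lfun_sub (a k : ℕ) (u v : Fin a → ℝ) :
    Lfun a k (fun i => u i - v i) = Lfun a k u - Lfun a k v := by
  simp [Lfun, mul_sub, Finset.sum_sub_distrib]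

lemma van_zero {a : ℕ} (ha : 1 ≤ a) (w : Fin a → ℝ) (hw : ∑ i, w i = 0)
    (S : Finset (Fin (2*a-1))) (hS : a - 1 ≤ S.card)
    (hL : ∀ k ∈ S, Lfun a (k : ℕ) w = 0) : w = 0 := by
  obtain ⟨S', hsub, hcard⟩ := Finset.exists_subset_card_eq hS
  let e := S'.orderIsoOfFin hcard
  set ν : Fin a → ℝ := fun i =>
    if h : (i : ℕ) < a - 1 then (((e ⟨i, h⟩ : Fin (2*a-1)) : ℕ) : ℝ) + 2 else 1 with hν
  have hinj : Function.Injective ν := by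
    intro i i' hii
    have hi := i.isLt
    have hi' := i'.isLt
    by_cases h : (i : ℕ) < a - 1 <;> by_cases h' : (i' : ℕ) < a - 1
    · simp only [hν, dif_pos h, dif_pos h'] at hii
      have hval : ((e ⟨i, h⟩ : Fin (2*a-1)) : ℕ) = ((e ⟨i', h'⟩ : Fin (2*a-1)) : ℕ) := by
        exact_mod_cast add_right_cancel hii
      have h2 : (⟨(i:ℕ), h⟩ : Fin (a-1)) = ⟨(i':ℕ), h'⟩ := by
        apply e.injective
        apply Subtype.ext
        exact Fin.ext hval
      exact Fin.ext (Fin.mk.inj_iff.mp h2)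
    · exfalso
      simp only [hν, dif_pos h, dif_neg h'] at hii
      have : (0:ℝ) ≤ (((e ⟨i, h⟩ : Fin (2*a-1)) : ℕ) : ℝ) := Nat.cast_nonneg _
      linarith
    · exfalso
      simp only [hν, dif_neg h, dif_pos h'] at hii
      have : (0:ℝ) ≤ (((e ⟨i', h'⟩ : Fin (2*a-1)) : ℕ) : ℝ) := Nat.cast_nonneg _
      linarith
    · exact Fin.ext (by omega)
  apply Matrix.eq_zero_of_forall_index_sum_pow_mul_eq_zero hinj
  intro j
  have hj := j.isLt
  by_cases h : (j : ℕ) < a - 1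
  · have hmem : (e ⟨j, h⟩ : Fin (2*a-1)) ∈ S := hsub (e ⟨j, h⟩).2
    have := hL _ hmem
    simpa [hν, dif_pos h, Lfun] using this
  · simp [hν, dif_neg h, hw]


lemma phi_inj {a : ℕ} (ha : 1 ≤ a) {u v u' v' : Fin a → ℝ}
    (hu : ∑ i, u i = 1) (hv : ∑ i, v i = 1) (hu' : ∑ i, u' i = 1) (hv' : ∑ i, v' i = 1)
    (hφ : phiFun a u + phiFun a v = phiFun a u' + phiFun a v') :
    (u = u' ∧ v = v') ∨ (u = v' ∧ v = u') := by
  classical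
  have key : ∀ k : Fin (2*a-1),
      (Lfun a k u = Lfun a k u' ∧ Lfun a k v = Lfun a k v') ∨
      (Lfun a k u = Lfun a k v' ∧ Lfun a k v = Lfun a k u') := by
    intro k
    have hk := k.isLt
    have h1 := congrFun hφ ⟨(k : ℕ), by omega⟩
    have h2 := congrFun hφ ⟨2*a - 1 + (k : ℕ), by omega⟩
    have hA : ¬(2*a - 1 + (k : ℕ) < 2*a - 1) := by omega
    have hB : 2*a - 1 + (k : ℕ) < 2*(2*a - 1) := by omega
    have hC : 2*a - 1 + (k : ℕ) - (2*a - 1) = (k : ℕ) := by omega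
    simp only [phiFun, Pi.add_apply, if_pos hk] at h1
    simp only [phiFun, Pi.add_apply, if_neg hA, if_pos hB, hC] at h2
    exact pair_aux h1 h2
  set S : Finset (Fin (2*a-1)) := Finset.univ.filter
    (fun k => Lfun a k u = Lfun a k u' ∧ Lfun a k v = Lfun a k v') with hSdef
  have hcards : S.card + Sᶜ.card = 2*a - 1 := by
    rw [Finset.card_add_card_compl]
    simp
  by_cases hbig : a - 1 ≤ S.card
  · left
    have huu' : u = u' := by
      have hz := van_zero ha (fun i => u i - u' i) (by rw [Finset.sum_sub_distrib, hu, hu']; ring)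
        S hbig (by
          intro k hk
          rw [Lfun_sub]
          have := (Finset.mem_filter.mp hk).2.1
          linarith)
      funext i
      have := congrFun hz i
      simpa [sub_eq_zero] using this
    have hvv' : v = v' := by
      have hz := van_zero ha (fun i => v i - v' i) (by rw [Finset.sum_sub_distrib, hv, hv']; ring)
        S hbig (by
          intro k hk
          rw [Lfun_sub]
          have := (Finset.mem_filter.mp hk).2.2
          linarith)
      funext i
      have := congrFun hz i
      simpa [sub_eq_zero] using this
    exact ⟨huu', hvv'⟩
  · right
    have hbig' : a - 1 ≤ Sᶜ.card := by omega
    have hcompl : ∀ k ∈ Sᶜ, Lfun a k u = Lfun a k v' ∧ Lfun a k v = Lfun a k u' := by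
      intro k hk
      have hnot : k ∉ S := Finset.mem_compl.mp hk
      rcases key k with h | h
      · exact absurd (Finset.mem_filter.mpr ⟨Finset.mem_univ k, h⟩) hnot
      · exact h
    have huv' : u = v' := by
      have hz := van_zero ha (fun i => u i - v' i) (by rw [Finset.sum_sub_distrib, hu, hv']; ring)
        Sᶜ hbig' (by
          intro k hk
          rw [Lfun_sub]
          have := (hcompl k hk).1
          linarith)
      funext i
      have := congrFun hz i
      simpa [sub_eq_zero] using this
    have hvu' : v = u' := by
      have hz := van_zero ha (fun i => v i - u' i) (by rw [Finset.sum_sub_distrib, hv, hu']; ring)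
        Sᶜ hbig' (by
          intro k hk
          rw [Lfun_sub]
          have := (hcompl k hk).2
          linarith)
      funext i
      have := congrFun hz i
      simpa [sub_eq_zero] using this
    exact ⟨huv', hvu'⟩


lemma phi_modulus {a : ℕ} (ha : 1 ≤ a) {ζ : ℝ} (hζ : 0 < ζ) :
    ∃ θ : ℝ, 0 < θ ∧ ∀ u v u' v' : Fin a → ℝ,
      u ∈ stdSimplex ℝ (Fin a) → v ∈ stdSimplex ℝ (Fin a) →
      u' ∈ stdSimplex ℝ (Fin a) → v' ∈ stdSimplex ℝ (Fin a) →
      dist (phiFun a u + phiFun a v) (phiFun a u' + phiFun a v') < θ →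
      (dist u u' < ζ ∧ dist v v' < ζ) ∨ (dist u v' < ζ ∧ dist v u' < ζ) := by
  classical
  set E := (Fin a → ℝ)
  set Δ := stdSimplex ℝ (Fin a) with hΔ
  set K : Set (E × E × E × E) := Δ ×ˢ (Δ ×ˢ (Δ ×ˢ Δ)) with hK
  have hKc : IsCompact K := (isCompact_stdSimplex _ _).prod
    ((isCompact_stdSimplex _ _).prod (((isCompact_stdSimplex _ _)).prod (isCompact_stdSimplex _ _)))
  set C : Set (E × E × E × E) := K ∩ {q |
      (ζ ≤ dist q.1 q.2.2.1 ∨ ζ ≤ dist q.2.1 q.2.2.2) ∧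
      (ζ ≤ dist q.1 q.2.2.2 ∨ ζ ≤ dist q.2.1 q.2.2.1)} with hC
  have c1 : Continuous fun q : E × E × E × E => q.1 := continuous_fst
  have c2 : Continuous fun q : E × E × E × E => q.2.1 := continuous_fst.comp continuous_snd
  have c3 : Continuous fun q : E × E × E × E => q.2.2.1 :=
    continuous_fst.comp (continuous_snd.comp continuous_snd)
  have c4 : Continuous fun q : E × E × E × E => q.2.2.2 :=
    continuous_snd.comp (continuous_snd.comp continuous_snd)
  have hCc : IsCompact C := by
    apply hKc.inter_right
    have hrw : {q : E × E × E × E |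
        (ζ ≤ dist q.1 q.2.2.1 ∨ ζ ≤ dist q.2.1 q.2.2.2) ∧
        (ζ ≤ dist q.1 q.2.2.2 ∨ ζ ≤ dist q.2.1 q.2.2.1)} =
        ({q : E × E × E × E | ζ ≤ dist q.1 q.2.2.1} ∪ {q | ζ ≤ dist q.2.1 q.2.2.2}) ∩
        ({q : E × E × E × E | ζ ≤ dist q.1 q.2.2.2} ∪ {q | ζ ≤ dist q.2.1 q.2.2.1}) := rfl
    rw [hrw]
    exact IsClosed.inter
      (IsClosed.union (isClosed_le continuous_const (c1.dist c3))
        (isClosed_le continuous_const (c2.dist c4)))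
      (IsClosed.union (isClosed_le continuous_const (c1.dist c4))
        (isClosed_le continuous_const (c2.dist c3)))
  set g : E × E × E × E → ℝ :=
    fun q => dist (phiFun a q.1 + phiFun a q.2.1) (phiFun a q.2.2.1 + phiFun a q.2.2.2) with hg
  have hgc : Continuous g := by
    apply Continuous.dist
    · exact ((phiFun_continuous a).comp continuous_fst).add
        ((phiFun_continuous a).comp (continuous_fst.comp continuous_snd))
    · exact ((phiFun_continuous a).comp
          (continuous_fst.comp (continuous_snd.comp continuous_snd))).add
        ((phiFun_continuous a).comp
          (continuous_snd.comp (continuous_snd.comp continuous_snd)))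
  -- key step : any quadruple in K but not in C satisfies the conclusion
  have hnotC : ∀ u v u' v' : Fin a → ℝ, u ∈ Δ → v ∈ Δ → u' ∈ Δ → v' ∈ Δ →
      (u, v, u', v') ∉ C →
      (dist u u' < ζ ∧ dist v v' < ζ) ∨ (dist u v' < ζ ∧ dist v u' < ζ) := by
    intro u v u' v' h1 h2 h3 h4 hq
    rw [hC] at hq
    simp only [Set.mem_inter_iff, Set.mem_setOf_eq, not_and_or] at hq
    have hmemK : (u, v, u', v') ∈ K := by
      rw [hK]; exact ⟨h1, h2, h3, h4⟩
    rcases hq with hq | hq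
    · exact absurd hmemK hq
    · have hq' : ¬((ζ ≤ dist u u' ∨ ζ ≤ dist v v') ∧ (ζ ≤ dist u v' ∨ ζ ≤ dist v u')) := hq
      rcases not_and_or.mp hq' with hq | hq
      · left
        push_neg at hq
        exact hq
      · right
        push_neg at hq
        exact hq
  rcases C.eq_empty_or_nonempty with hCe | hCne
  · refine ⟨1, one_pos, fun u v u' v' h1 h2 h3 h4 _ => ?_⟩
    apply hnotC u v u' v' h1 h2 h3 h4
    rw [hCe]
    exact Set.notMem_empty _
  · obtain ⟨q₀, hq₀C, hq₀min⟩ := hCc.exists_isMinOn hCne hgc.continuousOn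
    refine ⟨g q₀, ?_, ?_⟩
    · rcases lt_or_eq_of_le (dist_nonneg : 0 ≤ g q₀) with h | h
      · exact h
      · exfalso
        obtain ⟨hq₀K, hq₀bad⟩ := hq₀C
        obtain ⟨m1, m2, m3, m4⟩ : q₀.1 ∈ Δ ∧ q₀.2.1 ∈ Δ ∧ q₀.2.2.1 ∈ Δ ∧ q₀.2.2.2 ∈ Δ := by
          rw [hK] at hq₀K
          exact ⟨hq₀K.1, hq₀K.2.1, hq₀K.2.2.1, hq₀K.2.2.2⟩
        have heq : phiFun a q₀.1 + phiFun a q₀.2.1 = phiFun a q₀.2.2.1 + phiFun a q₀.2.2.2 :=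
          dist_eq_zero.mp h.symm
        rcases phi_inj ha m1.2 m2.2 m3.2 m4.2 heq with ⟨e1, e2⟩ | ⟨e1, e2⟩
        · rcases hq₀bad.1 with hb | hb
          · rw [e1] at hb; simp at hb; linarith
          · rw [e2] at hb; simp at hb; linarith
        · rcases hq₀bad.2 with hb | hb
          · rw [e1] at hb; simp at hb; linarith
          · rw [e2] at hb; simp at hb; linarith
    · intro u v u' v' h1 h2 h3 h4 hd
      apply hnotC u v u' v' h1 h2 h3 h4
      intro hmem
      have := hq₀min hmem
      simp only [hg] at this hd
      exact absurd hd (not_lt.mpr this)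


lemma wp_upper {Ω : Type*} [MetricSpace Ω] {p : ℝ} (hp : 1 ≤ p) {a : ℕ}
    (g : Ω → Fin a → ℝ) (hg0 : ∀ x i, 0 ≤ g x i) (hg1 : ∀ x, ∑ i, g x i = 1)
    {r : ℝ} (hr : 0 ≤ r) (c : Fin a → Ω) (hsupp : ∀ x i, 0 < g x i → dist x (c i) < r)
    {D : ℝ} (hD0 : 0 ≤ D) (hD : ∀ x y : Ω, dist x y ≤ D)
    (A A' : WPS Ω) (hA : A.IsWeighted) (hA' : A'.IsWeighted) :
    WPS.Wp p A A' ≤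
      ((2*r)^p + (∑ i, |(∑ j, A.w j * g (A.pts j) i) - (∑ k, A'.w k * g (A'.pts k) i)|)/2
        * D^p) ^ (1/p) := by
  have hp0 : (0:ℝ) < p := by linarith
  have hip : (0:ℝ) ≤ 1/p := by positivity
  set u : Fin a → ℝ := fun i => ∑ j, A.w j * g (A.pts j) i with hu
  set u' : Fin a → ℝ := fun i => ∑ k, A'.w k * g (A'.pts k) i with hu'
  set M : Fin a → ℝ := fun i => max (u i) (u' i) with hM
  have hu0 : ∀ i, 0 ≤ u i := fun i =>
    Finset.sum_nonneg fun j _ => mul_nonneg (hA.1 j) (hg0 _ i)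
  have hu'0 : ∀ i, 0 ≤ u' i := fun i =>
    Finset.sum_nonneg fun k _ => mul_nonneg (hA'.1 k) (hg0 _ i)
  have hM0 : ∀ i, 0 ≤ M i := fun i => le_trans (hu0 i) (le_max_left _ _)
  have husum : ∑ i, u i = 1 := by
    rw [hu, Finset.sum_comm]
    rw [Finset.sum_congr rfl (fun j _ => by rw [← Finset.mul_sum, hg1, mul_one])]
    exact hA.2
  have hu'sum : ∑ i, u' i = 1 := by
    rw [hu', Finset.sum_comm]
    rw [Finset.sum_congr rfl (fun k _ => by rw [← Finset.mul_sum, hg1, mul_one])]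
    exact hA'.2
  have hratio : ∀ i, u i * (M i)⁻¹ ≤ 1 := by
    intro i
    rcases eq_or_lt_of_le (hM0 i) with h | h
    · have h1 : u i ≤ M i := le_max_left _ _
      have h0 : u i = 0 := le_antisymm (by linarith) (hu0 i)
      rw [h0, zero_mul]; norm_num
    · rw [mul_inv_le_iff₀ h, one_mul]; exact le_max_left _ _
  have hratio' : ∀ i, u' i * (M i)⁻¹ ≤ 1 := by
    intro i
    rcases eq_or_lt_of_le (hM0 i) with h | h
    · have h1 : u' i ≤ M i := le_max_right _ _
      have h0 : u' i = 0 := le_antisymm (by linarith) (hu'0 i)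
      rw [h0, zero_mul]; norm_num
    · rw [mul_inv_le_iff₀ h, one_mul]; exact le_max_right _ _
  set T : Fin A.n → Fin A'.n → ℝ := fun j k =>
    ∑ i, (A.w j * g (A.pts j) i) * (A'.w k * g (A'.pts k) i) * (M i)⁻¹ with hT
  have hT0 : ∀ j k, 0 ≤ T j k := by
    intro j k
    apply Finset.sum_nonneg
    intro i _
    exact mul_nonneg (mul_nonneg (mul_nonneg (hA.1 j) (hg0 _ i))
      (mul_nonneg (hA'.1 k) (hg0 _ i))) (inv_nonneg.mpr (hM0 i))
  have rowT : ∀ j, ∑ k, T j k = ∑ i, (A.w j * g (A.pts j) i) * (u' i * (M i)⁻¹) := by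
    intro j
    rw [hT]
    rw [Finset.sum_comm]
    apply Finset.sum_congr rfl
    intro i _
    rw [← Finset.sum_mul, ← Finset.mul_sum]
    simp only [hu']
    ring
  have colT : ∀ k, ∑ j, T j k = ∑ i, (A'.w k * g (A'.pts k) i) * (u i * (M i)⁻¹) := by
    intro k
    rw [hT]
    rw [Finset.sum_comm]
    apply Finset.sum_congr rfl
    intro i _
    have : ∀ j, (A.w j * g (A.pts j) i) * (A'.w k * g (A'.pts k) i) * (M i)⁻¹
        = (A'.w k * g (A'.pts k) i) * (M i)⁻¹ * (A.w j * g (A.pts j) i) := by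
      intro j; ring
    rw [Finset.sum_congr rfl (fun j _ => this j), ← Finset.mul_sum]
    simp only [hu]
    ring
  have rowT_le : ∀ j, ∑ k, T j k ≤ A.w j := by
    intro j
    rw [rowT j]
    calc ∑ i, (A.w j * g (A.pts j) i) * (u' i * (M i)⁻¹)
        ≤ ∑ i, (A.w j * g (A.pts j) i) * 1 := by
          apply Finset.sum_le_sum
          intro i _
          exact mul_le_mul_of_nonneg_left (hratio' i) (mul_nonneg (hA.1 j) (hg0 _ i))
      _ = A.w j := by
          simp only [mul_one]
          rw [← Finset.mul_sum, hg1, mul_one]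
  have colT_le : ∀ k, ∑ j, T j k ≤ A'.w k := by
    intro k
    rw [colT k]
    calc ∑ i, (A'.w k * g (A'.pts k) i) * (u i * (M i)⁻¹)
        ≤ ∑ i, (A'.w k * g (A'.pts k) i) * 1 := by
          apply Finset.sum_le_sum
          intro i _
          exact mul_le_mul_of_nonneg_left (hratio i) (mul_nonneg (hA'.1 k) (hg0 _ i))
      _ = A'.w k := by
          simp only [mul_one]
          rw [← Finset.mul_sum, hg1, mul_one]
  set ST : ℝ := ∑ j, ∑ k, T j k with hST
  set l : Fin A.n → ℝ := fun j => A.w j - ∑ k, T j k with hl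
  set l' : Fin A'.n → ℝ := fun k => A'.w k - ∑ j, T j k with hl'
  set LL : ℝ := 1 - ST with hLL
  have hl0 : ∀ j, 0 ≤ l j := fun j => sub_nonneg.mpr (rowT_le j)
  have hl'0 : ∀ k, 0 ≤ l' k := fun k => sub_nonneg.mpr (colT_le k)
  have hsl : ∑ j, l j = LL := by
    simp only [hl, hLL, hST]
    rw [Finset.sum_sub_distrib, hA.2]
  have hsl' : ∑ k, l' k = LL := by
    simp only [hl', hLL, hST]
    rw [Finset.sum_sub_distrib, hA'.2, Finset.sum_comm]
  have hLL0 : 0 ≤ LL := hsl ▸ Finset.sum_nonneg (fun j _ => hl0 j)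
  have hSTmin : ST = ∑ i, u i * (u' i * (M i)⁻¹) := by
    rw [hST]
    rw [Finset.sum_congr rfl (fun j _ => rowT j), Finset.sum_comm]
    apply Finset.sum_congr rfl
    intro i _
    rw [← Finset.sum_mul]
  have hminval : ∀ i, u i * (u' i * (M i)⁻¹) = min (u i) (u' i) := by
    intro i
    rcases le_total (u i) (u' i) with h | h
    · rw [hM] at *
      rcases eq_or_lt_of_le (hu'0 i) with h0 | h0
      · have hu0' : u i = 0 := le_antisymm (by rw [← h0] at h; exact h) (hu0 i)
        simp [hu0', ← h0]
      · have hmax : max (u i) (u' i) = u' i := max_eq_right h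
        have hmin : min (u i) (u' i) = u i := min_eq_left h
        simp only [hmax, hmin]
        rw [mul_inv_cancel₀ (ne_of_gt h0), mul_one]
    · rcases eq_or_lt_of_le (hu0 i) with h0 | h0
      · have hu0' : u' i = 0 := le_antisymm (by rw [← h0] at h; exact h) (hu'0 i)
        simp [hu0', ← h0]
      · have hmax : max (u i) (u' i) = u i := max_eq_left h
        have hmin : min (u i) (u' i) = u' i := min_eq_right h
        simp only [hM, hmax, hmin]
        field_simp
  have hST0 : 0 ≤ ST := hST ▸ Finset.sum_nonneg fun j _ => Finset.sum_nonneg fun k _ => hT0 j k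
  have hSTle1 : ST ≤ 1 := by
    rw [hSTmin]
    calc ∑ i, u i * (u' i * (M i)⁻¹) = ∑ i, min (u i) (u' i) :=
        Finset.sum_congr rfl (fun i _ => hminval i)
      _ ≤ ∑ i, u i := Finset.sum_le_sum (fun i _ => min_le_left _ _)
      _ = 1 := husum
  have habs : ∀ i, min (u i) (u' i) = (u i + u' i - |u i - u' i|)/2 := by
    intro i
    rcases le_total (u i) (u' i) with h | h
    · rw [min_eq_left h, abs_of_nonpos (by linarith)]; ring
    · rw [min_eq_right h, abs_of_nonneg (by linarith)]; ring
  have hLLval : LL = (∑ i, |u i - u' i|)/2 := by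
    rw [hLL, hSTmin]
    rw [Finset.sum_congr rfl fun i _ => (hminval i).trans (habs i)]
    rw [← Finset.sum_div, Finset.sum_sub_distrib, Finset.sum_add_distrib, husum, hu'sum]
    ring
  set Pi : Fin A.n → Fin A'.n → ℝ := fun j k => T j k + l j * l' k * LL⁻¹ with hPi
  have hPi0 : ∀ j k, 0 ≤ Pi j k := fun j k => add_nonneg (hT0 j k)
    (mul_nonneg (mul_nonneg (hl0 j) (hl'0 k)) (inv_nonneg.mpr hLL0))
  have hlzero : LL = 0 → ∀ j, l j = 0 := by
    intro h0 j
    have := (Finset.sum_eq_zero_iff_of_nonneg (fun j _ => hl0 j)).mp (by rw [hsl, h0])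
    exact this j (Finset.mem_univ j)
  have hl'zero : LL = 0 → ∀ k, l' k = 0 := by
    intro h0 k
    have := (Finset.sum_eq_zero_iff_of_nonneg (fun k _ => hl'0 k)).mp (by rw [hsl', h0])
    exact this k (Finset.mem_univ k)
  have rowPi : ∀ j, ∑ k, Pi j k = A.w j := by
    intro j
    simp only [hPi]
    rw [Finset.sum_add_distrib]
    have h2 : ∑ k, l j * l' k * LL⁻¹ = l j * LL * LL⁻¹ := by
      have he : ∀ k, l j * l' k * LL⁻¹ = (l j * LL⁻¹) * l' k := fun k => by ring
      rw [Finset.sum_congr rfl fun k _ => he k, ← Finset.mul_sum, hsl']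
      ring
    rw [h2]
    by_cases h0 : LL = 0
    · have hlj := hlzero h0 j
      simp only [hl] at hlj
      rw [h0]
      simp
      linarith
    · rw [mul_assoc, mul_inv_cancel₀ h0, mul_one]
      have hlj : l j = A.w j - ∑ k, T j k := by rw [hl]
      rw [hlj]
      ring
  have colPi : ∀ k, ∑ j, Pi j k = A'.w k := by
    intro k
    simp only [hPi]
    rw [Finset.sum_add_distrib]
    have h2 : ∑ j, l j * l' k * LL⁻¹ = l' k * LL * LL⁻¹ := by
      have he : ∀ j, l j * l' k * LL⁻¹ = (l' k * LL⁻¹) * l j := fun j => by ring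
      rw [Finset.sum_congr rfl fun j _ => he j, ← Finset.mul_sum, hsl]
      ring
    rw [h2]
    by_cases h0 : LL = 0
    · have hlk := hl'zero h0 k
      simp only [hl'] at hlk
      rw [h0]
      simp
      linarith
    · rw [mul_assoc, mul_inv_cancel₀ h0, mul_one]
      have hlk : l' k = A'.w k - ∑ j, T j k := by rw [hl']
      rw [hlk]
      ring
  set CC : ℝ := ∑ j, ∑ k, Pi j k * dist (A.pts j) (A'.pts k) ^ p with hCC
  have hd0 : ∀ (x : Ω) (y : Ω), (0:ℝ) ≤ dist x y ^ p := fun x y => Real.rpow_nonneg dist_nonneg p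
  have hCC0 : 0 ≤ CC := hCC ▸ Finset.sum_nonneg fun j _ => Finset.sum_nonneg fun k _ =>
    mul_nonneg (hPi0 j k) (hd0 _ _)
  have h2r0 : (0:ℝ) ≤ (2*r)^p := Real.rpow_nonneg (by linarith) p
  have hDp0 : (0:ℝ) ≤ D^p := Real.rpow_nonneg hD0 p
  have hTd : ∀ j k, T j k * dist (A.pts j) (A'.pts k) ^ p ≤ T j k * (2*r)^p := by
    intro j k
    rcases eq_or_lt_of_le (hT0 j k) with h0 | h0
    · rw [← h0]
      simp
    · have h0' : (0:ℝ) < T j k := h0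
      rw [hT] at h0'
      simp only at h0'
      have hex : ∃ i ∈ (Finset.univ : Finset (Fin a)),
          0 < (A.w j * g (A.pts j) i) * (A'.w k * g (A'.pts k) i) * (M i)⁻¹ := by
        by_contra hc
        push_neg at hc
        have hz : ∑ i, (A.w j * g (A.pts j) i) * (A'.w k * g (A'.pts k) i) * (M i)⁻¹ ≤ 0 :=
          Finset.sum_nonpos fun i hi => hc i hi
        linarith
      obtain ⟨i, -, hi⟩ := hex
      have hα : 0 < g (A.pts j) i := by
        rcases (hg0 (A.pts j) i).lt_or_eq with h | h
        · exact h
        · exfalso; rw [← h] at hi; simp at hi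
      have hβ : 0 < g (A'.pts k) i := by
        rcases (hg0 (A'.pts k) i).lt_or_eq with h | h
        · exact h
        · exfalso; rw [← h] at hi; simp at hi
      have hd1 : dist (A.pts j) (c i) < r := hsupp _ i hα
      have hd2 : dist (A'.pts k) (c i) < r := hsupp _ i hβ
      have hdist : dist (A.pts j) (A'.pts k) ≤ 2*r := by
        calc dist (A.pts j) (A'.pts k)
            ≤ dist (A.pts j) (c i) + dist (c i) (A'.pts k) := dist_triangle _ _ _
          _ = dist (A.pts j) (c i) + dist (A'.pts k) (c i) := by rw [dist_comm (c i)]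
          _ ≤ 2*r := by linarith
      exact mul_le_mul_of_nonneg_left
        (Real.rpow_le_rpow dist_nonneg hdist (le_of_lt hp0)) (hT0 j k)
  have hpart1 : ∑ j, ∑ k, T j k * dist (A.pts j) (A'.pts k) ^ p ≤ (2*r)^p := by
    calc ∑ j, ∑ k, T j k * dist (A.pts j) (A'.pts k) ^ p
        ≤ ∑ j, ∑ k, T j k * (2*r)^p :=
          Finset.sum_le_sum fun j _ => Finset.sum_le_sum fun k _ => hTd j k
      _ = ST * (2*r)^p := by
          rw [hST]
          simp only [← Finset.sum_mul]
      _ ≤ 1 * (2*r)^p := mul_le_mul_of_nonneg_right hSTle1 h2r0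
      _ = (2*r)^p := one_mul _
  have hpart2 : ∑ j, ∑ k, (l j * l' k * LL⁻¹) * dist (A.pts j) (A'.pts k) ^ p ≤ LL * D^p := by
    by_cases h0 : LL = 0
    · have hz : ∀ j, ∑ k, (l j * l' k * LL⁻¹) * dist (A.pts j) (A'.pts k) ^ p = 0 := by
        intro j
        apply Finset.sum_eq_zero
        intro k _
        rw [hlzero h0 j]
        ring
      rw [Finset.sum_congr rfl fun j _ => hz j]
      simp [h0]
    · calc ∑ j, ∑ k, (l j * l' k * LL⁻¹) * dist (A.pts j) (A'.pts k) ^ p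
          ≤ ∑ j, ∑ k, (l j * l' k * LL⁻¹) * D^p := by
            apply Finset.sum_le_sum
            intro j _
            apply Finset.sum_le_sum
            intro k _
            exact mul_le_mul_of_nonneg_left
              (Real.rpow_le_rpow dist_nonneg (hD _ _) (le_of_lt hp0))
              (mul_nonneg (mul_nonneg (hl0 j) (hl'0 k)) (inv_nonneg.mpr hLL0))
        _ = LL * (LL * (LL⁻¹ * D^p)) := by
            have hcalc : ∀ j, ∑ k, (l j * l' k * LL⁻¹) * D^p = l j * (LL * (LL⁻¹ * D^p)) := by
              intro j
              have he : ∀ k, (l j * l' k * LL⁻¹) * D^p = l j * (l' k * (LL⁻¹ * D^p)) :=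
                fun k => by ring
              rw [Finset.sum_congr rfl fun k _ => he k, ← Finset.mul_sum, ← Finset.sum_mul, hsl']
            rw [Finset.sum_congr rfl fun j _ => hcalc j, ← Finset.sum_mul, hsl]
        _ = LL * D^p := by field_simp
  have hsplit : CC = (∑ j, ∑ k, T j k * dist (A.pts j) (A'.pts k) ^ p)
      + ∑ j, ∑ k, (l j * l' k * LL⁻¹) * dist (A.pts j) (A'.pts k) ^ p := by
    rw [hCC, ← Finset.sum_add_distrib]
    apply Finset.sum_congr rfl
    intro j _
    rw [← Finset.sum_add_distrib]
    apply Finset.sum_congr rfl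
    intro k _
    simp only [hPi]
    ring
  have hcost : CC ≤ (2*r)^p + LL * D^p := by
    rw [hsplit]
    exact add_le_add hpart1 hpart2
  set WSet : Set ℝ := { cc : ℝ | ∃ Tm : Fin A.n → Fin A'.n → ℝ,
    (∀ i j, 0 ≤ Tm i j) ∧
    (∀ i, (∑ j, Tm i j) = A.w i) ∧
    (∀ j, (∑ i, Tm i j) = A'.w j) ∧
    cc = (∑ i, ∑ j, Tm i j * dist (A.pts i) (A'.pts j) ^ p) ^ (1 / p) } with hWSet
  have hWpdef : WPS.Wp p A A' = sInf WSet := rfl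
  have hmem : CC ^ (1/p) ∈ WSet := by
    refine ⟨Pi, hPi0, rowPi, colPi, ?_⟩
    rw [hCC]
  have hbdd : BddBelow WSet := by
    refine ⟨0, ?_⟩
    rintro cc ⟨T', hT'0, -, -, rfl⟩
    exact Real.rpow_nonneg (Finset.sum_nonneg fun j _ => Finset.sum_nonneg fun k _ =>
      mul_nonneg (hT'0 j k) (hd0 _ _)) _
  rw [hWpdef]
  calc sInf WSet ≤ CC ^ (1/p) := csInf_le hbdd hmem
    _ ≤ ((2*r)^p + LL * D^p) ^ (1/p) := Real.rpow_le_rpow hCC0 hcost hip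
    _ = ((2*r)^p + (∑ i, |u i - u' i|)/2 * D^p) ^ (1/p) := by rw [hLLval]


end WassAux

set_option maxHeartbeats 2000000 in
/-- Corollary 3.5 of the paper.  Let `(Ω, d)` be a compact metric
space, `N ∈ ℕ`, `1 ≤ p < ∞`, and let `X` be the weighted point sets over `Ω` with at most
`N` points, with the `p`-Wasserstein metric.  If `f : X × X → ℝ` is uniformly continuous
(w.r.t. the sum metric `W_p(A,A') + W_p(B,B')`) and symmetric, then for every `ε > 0`
there are `δ > 0`, `a = ν_Ω((1/2)(δ/2)^{1/p})`, `a' = 4a + 1` and continuous maps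
`h : Ω → ℝ^a`, `φ : ℝ^a → ℝ^{a'}`, `ρ : ℝ^{a'} → ℝ` such that
`|f(A,B) − ρ(φ(∑_{(x,w)∈A} w·h(x)) + φ(∑_{(x,w)∈B} w·h(x)))| < ε` for all `A, B ∈ X`. -/
theorem wasserstein_product_net_universality
    (Ω : Type*) [MetricSpace Ω] [CompactSpace Ω]
    (N : ℕ) (p : ℝ) (hp : 1 ≤ p)
    (f : WPS Ω → WPS Ω → ℝ)
    (hf_unif : ∀ ε : ℝ, 0 < ε → ∃ η : ℝ, 0 < η ∧ ∀ A A' B B' : WPS Ω,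
      A.IsWeighted → A.n ≤ N → A'.IsWeighted → A'.n ≤ N →
      B.IsWeighted → B.n ≤ N → B'.IsWeighted → B'.n ≤ N →
      WPS.Wp p A A' + WPS.Wp p B B' < η → |f A B - f A' B'| < ε)
    (hf_symm : ∀ A B : WPS Ω, A.IsWeighted → A.n ≤ N → B.IsWeighted → B.n ≤ N →
      f A B = f B A)
    (ε : ℝ) (hε : 0 < ε) :
    ∃ δ : ℝ, 0 < δ ∧
      ∃ (h : Ω → (Fin (coveringNumber Ω ((1/2) * (δ/2) ^ (1/p))) → ℝ))
        (φ : (Fin (coveringNumber Ω ((1/2) * (δ/2) ^ (1/p))) → ℝ) →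
             (Fin (4 * coveringNumber Ω ((1/2) * (δ/2) ^ (1/p)) + 1) → ℝ))
        (ρ : (Fin (4 * coveringNumber Ω ((1/2) * (δ/2) ^ (1/p)) + 1) → ℝ) → ℝ),
        Continuous h ∧ Continuous φ ∧ Continuous ρ ∧
        ∀ A B : WPS Ω, A.IsWeighted → A.n ≤ N → B.IsWeighted → B.n ≤ N →
          |f A B -
            ρ (φ (∑ i, A.w i • h (A.pts i)) + φ (∑ i, B.w i • h (B.pts i)))| < ε := by
  classical
  by_cases hX : ∃ A : WPS Ω, A.IsWeighted ∧ A.n ≤ N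
  case neg =>
    refine ⟨1, one_pos, fun _ _ => 0, fun _ _ => 0, fun _ => 0,
      continuous_const, continuous_const, continuous_const, ?_⟩
    intro A B hA hAn _ _
    exact absurd ⟨A, hA, hAn⟩ hX
  obtain ⟨A₀, hA₀w, hA₀n⟩ := hX
  have hA₀pos : 0 < A₀.n := by
    by_contra hc
    push_neg at hc
    haveI : IsEmpty (Fin A₀.n) := ⟨fun i => absurd i.isLt (by omega)⟩
    have := hA₀w.2
    rw [Finset.univ_eq_empty, Finset.sum_empty] at this
    norm_num at this
  have x₀ : Ω := A₀.pts ⟨0, hA₀pos⟩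
  have hp0 : (0:ℝ) < p := by linarith
  have hpne : p ≠ 0 := ne_of_gt hp0
  -- uniform continuity at ε/2
  obtain ⟨η, hη, hfu⟩ := hf_unif (ε/2) (by linarith)
  set δ : ℝ := (η/2)^p with hδdef
  have hδpos : 0 < δ := Real.rpow_pos_of_pos (by linarith) p
  refine ⟨δ, hδpos, ?_⟩
  set r : ℝ := (1/2) * (δ/2)^(1/p) with hrdef
  have hrpos : 0 < r := by
    have : (0:ℝ) < (δ/2)^(1/p) := Real.rpow_pos_of_pos (by linarith) _
    rw [hrdef]; linarith
  set a : ℕ := coveringNumber Ω r with hadef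
  -- extract the covering
  have hcovne : { m : ℕ | ∃ c : Fin m → Ω, ∀ x : Ω, ∃ i, dist x (c i) < r }.Nonempty := by
    have htb : TotallyBounded (Set.univ : Set Ω) := isCompact_univ.totallyBounded
    obtain ⟨t, -, htfin, htcov⟩ := totallyBounded_iff_subset.mp htb
      { q : Ω × Ω | dist q.1 q.2 < r } (Metric.dist_mem_uniformity hrpos)
    refine ⟨htfin.toFinset.card, fun i => ((htfin.toFinset.equivFin.symm i : htfin.toFinset) : Ω), ?_⟩
    intro x
    have hx := htcov (Set.mem_univ x)
    rw [Set.mem_iUnion₂] at hx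
    obtain ⟨y, hyt, hxy⟩ := hx
    have hyF : y ∈ htfin.toFinset := htfin.mem_toFinset.mpr hyt
    refine ⟨htfin.toFinset.equivFin ⟨y, hyF⟩, ?_⟩
    simpa only [Equiv.symm_apply_apply, Set.mem_setOf_eq] using hxy
  have hamem : a ∈ { m : ℕ | ∃ c : Fin m → Ω, ∀ x : Ω, ∃ i, dist x (c i) < r } :=
    Nat.sInf_mem hcovne
  obtain ⟨cc, hcc⟩ := hamem
  have ha1 : 1 ≤ a := by
    by_contra hc
    push_neg at hc
    obtain ⟨i, -⟩ := hcc x₀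
    exact absurd i.isLt (by omega)
  -- the partition of unity
  set tent : Fin a → Ω → ℝ := fun i x => max (1 - dist x (cc i) / r) 0 with htentdef
  set tot : Ω → ℝ := fun x => ∑ i, tent i x with htotdef
  have htent0 : ∀ i x, 0 ≤ tent i x := fun i x => le_max_right _ _
  have htotpos : ∀ x, 0 < tot x := by
    intro x
    obtain ⟨i, hi⟩ := hcc x
    have hpos : 0 < tent i x := by
      simp only [htentdef]
      apply lt_max_iff.mpr
      left
      have : dist x (cc i) / r < 1 := (div_lt_one hrpos).mpr hi
      linarith
    exact lt_of_lt_of_le hpos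
      (Finset.single_le_sum (fun j _ => htent0 j x) (Finset.mem_univ i))
  set hfun : Ω → Fin a → ℝ := fun x i => tent i x / tot x with hhdef
  have hh0 : ∀ x i, 0 ≤ hfun x i := fun x i => div_nonneg (htent0 i x) (le_of_lt (htotpos x))
  have hh1 : ∀ x, ∑ i, hfun x i = 1 := by
    intro x
    simp only [hhdef]
    rw [← Finset.sum_div]
    exact div_self (ne_of_gt (htotpos x))
  have hhsupp : ∀ x i, 0 < hfun x i → dist x (cc i) < r := by
    intro x i hpos
    simp only [hhdef] at hpos
    have htp : 0 < tent i x := by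
      by_contra hcon
      push_neg at hcon
      have h0 : tent i x = 0 := le_antisymm hcon (htent0 i x)
      rw [h0, zero_div] at hpos
      exact lt_irrefl 0 hpos
    simp only [htentdef] at htp
    rcases lt_max_iff.mp htp with h | h
    · have : dist x (cc i) / r < 1 := by linarith
      exact (div_lt_one hrpos).mp this
    · exact absurd h (lt_irrefl 0)
  have htentcont : ∀ i, Continuous (tent i) := by
    intro i
    simp only [htentdef]
    exact ((continuous_const.sub ((continuous_id.dist continuous_const).div_const r)).max
      continuous_const)
  have htotcont : Continuous tot := by
    simp only [htotdef]
    exact continuous_finset_sum _ (fun i _ => htentcont i)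
  have hhcont : Continuous hfun := by
    apply continuous_pi
    intro i
    exact (htentcont i).div htotcont (fun x => ne_of_gt (htotpos x))
  -- diameter
  set D : ℝ := Metric.diam (Set.univ : Set Ω) with hDdef
  have hD0 : 0 ≤ D := Metric.diam_nonneg
  have hDb : ∀ x y : Ω, dist x y ≤ D := fun x y =>
    Metric.dist_le_diam_of_mem Metric.isBounded_of_compactSpace (Set.mem_univ x) (Set.mem_univ y)
  -- the measure vector
  set mvec : WPS Ω → (Fin a → ℝ) := fun A => ∑ j, A.w j • hfun (A.pts j) with hmvecdef
  have hmv_apply : ∀ (A : WPS Ω) (i : Fin a),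
      mvec A i = ∑ j, A.w j * hfun (A.pts j) i := by
    intro A i
    simp only [hmvecdef, Finset.sum_apply, Pi.smul_apply, smul_eq_mul]
  have hmv_mem : ∀ A : WPS Ω, A.IsWeighted → mvec A ∈ stdSimplex ℝ (Fin a) := by
    intro A hA
    constructor
    · intro i
      rw [hmv_apply]
      exact Finset.sum_nonneg fun j _ => mul_nonneg (hA.1 j) (hh0 _ i)
    · rw [Finset.sum_congr rfl fun i _ => hmv_apply A i, Finset.sum_comm]
      rw [Finset.sum_congr rfl (fun j _ => by rw [← Finset.mul_sum, hh1, mul_one])]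
      exact hA.2
  -- quantitative parameters
  have hQ0 : (0:ℝ) ≤ (a:ℝ) * D^p := mul_nonneg (Nat.cast_nonneg a) (Real.rpow_nonneg hD0 p)
  set ζ : ℝ := δ / (2*((a:ℝ) * D^p + 1)) with hζdef
  have hζpos : 0 < ζ := by
    apply div_pos hδpos
    linarith
  obtain ⟨θ, hθpos, hmod⟩ := WassAux.phi_modulus ha1 hζpos
  -- key Wasserstein bound
  have h2rp : (2*r)^p = δ/2 := by
    have h2r : 2*r = (δ/2)^(1/p) := by rw [hrdef]; ring
    rw [h2r, ← Real.rpow_mul (by linarith : (0:ℝ) ≤ δ/2), one_div,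
      inv_mul_cancel₀ hpne, Real.rpow_one]
  have hκroot : δ^(1/p) = η/2 := by
    rw [hδdef, ← Real.rpow_mul (by linarith : (0:ℝ) ≤ η/2),
      mul_one_div, div_self hpne, Real.rpow_one]
  have hWpbound : ∀ A A' : WPS Ω, A.IsWeighted → A'.IsWeighted →
      dist (mvec A) (mvec A') < ζ → WPS.Wp p A A' < η/2 := by
    intro A A' hAw hA'w hdist
    have hup := WassAux.wp_upper hp hfun hh0 hh1 (le_of_lt hrpos) cc hhsupp hD0 hDb A A' hAw hA'w
    have habs : ∀ i : Fin a,
        |(∑ j, A.w j * hfun (A.pts j) i) - (∑ k, A'.w k * hfun (A'.pts k) i)|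
          ≤ dist (mvec A) (mvec A') := by
      intro i
      rw [← hmv_apply A i, ← hmv_apply A' i, ← Real.dist_eq]
      exact dist_le_pi_dist (mvec A) (mvec A') i
    have hsum : ∑ i : Fin a,
        |(∑ j, A.w j * hfun (A.pts j) i) - (∑ k, A'.w k * hfun (A'.pts k) i)|
          ≤ (a:ℝ) * ζ := by
      calc ∑ i : Fin a, |(∑ j, A.w j * hfun (A.pts j) i) - (∑ k, A'.w k * hfun (A'.pts k) i)|
          ≤ ∑ _i : Fin a, dist (mvec A) (mvec A') := Finset.sum_le_sum fun i _ => habs i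
        _ = (a:ℝ) * dist (mvec A) (mvec A') := by
            rw [Finset.sum_const, Finset.card_univ, Fintype.card_fin, nsmul_eq_mul]
        _ ≤ (a:ℝ) * ζ := mul_le_mul_of_nonneg_left (le_of_lt hdist) (Nat.cast_nonneg a)
    have hbase : (2*r)^p
        + (∑ i, |(∑ j, A.w j * hfun (A.pts j) i) - (∑ k, A'.w k * hfun (A'.pts k) i)|)/2 * D^p
        < δ := by
      rw [h2rp]
      have hDp0 : (0:ℝ) ≤ D^p := Real.rpow_nonneg hD0 p
      have h1 : (∑ i, |(∑ j, A.w j * hfun (A.pts j) i) - (∑ k, A'.w k * hfun (A'.pts k) i)|)/2 * D^p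
          ≤ ((a:ℝ) * ζ)/2 * D^p := by
        apply mul_le_mul_of_nonneg_right _ hDp0
        linarith
      have h2 : ((a:ℝ) * ζ)/2 * D^p ≤ δ/4 := by
        have he : ((a:ℝ) * ζ)/2 * D^p = ((a:ℝ)*D^p) * δ / (4*((a:ℝ)*D^p+1)) := by
          rw [hζdef]
          field_simp
          ring
        rw [he, div_le_div_iff₀ (by linarith) (by norm_num : (0:ℝ) < 4)]
        nlinarith [hδpos, hQ0, mul_nonneg (le_of_lt hδpos) hQ0]
      linarith
    have hb0 : (0:ℝ) ≤ (2*r)^p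
        + (∑ i, |(∑ j, A.w j * hfun (A.pts j) i) - (∑ k, A'.w k * hfun (A'.pts k) i)|)/2 * D^p := by
      have : (0:ℝ) ≤ (2*r)^p := Real.rpow_nonneg (by linarith) p
      have h2 : (0:ℝ) ≤ (∑ i, |(∑ j, A.w j * hfun (A.pts j) i) - (∑ k, A'.w k * hfun (A'.pts k) i)|) :=
        Finset.sum_nonneg fun i _ => abs_nonneg _
      have hDp0 : (0:ℝ) ≤ D^p := Real.rpow_nonneg hD0 p
      positivity
    calc WPS.Wp p A A' ≤ _ := hup
      _ < δ^(1/p) := Real.rpow_lt_rpow hb0 hbase (by positivity)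
      _ = η/2 := hκroot
  -- the image set and its net
  set Φ2 : (Fin a → ℝ) × (Fin a → ℝ) → (Fin (4*a+1) → ℝ) :=
    fun q => WassAux.phiFun a q.1 + WassAux.phiFun a q.2 with hΦ2def
  set SS : Set (Fin (4*a+1) → ℝ) := {s | ∃ A B : WPS Ω,
    A.IsWeighted ∧ A.n ≤ N ∧ B.IsWeighted ∧ B.n ≤ N ∧
    s = WassAux.phiFun a (mvec A) + WassAux.phiFun a (mvec B)} with hSSdef
  have hSStb : TotallyBounded SS := by
    have himg : SS ⊆ Φ2 '' (stdSimplex ℝ (Fin a) ×ˢ stdSimplex ℝ (Fin a)) := by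
      rintro s ⟨A, B, hAw, -, hBw, -, rfl⟩
      exact ⟨(mvec A, mvec B), ⟨hmv_mem A hAw, hmv_mem B hBw⟩, rfl⟩
    have hΦ2cont : Continuous Φ2 := by
      simp only [hΦ2def]
      exact ((WassAux.phiFun_continuous a).comp continuous_fst).add
        ((WassAux.phiFun_continuous a).comp continuous_snd)
    exact TotallyBounded.subset himg
      (((isCompact_stdSimplex _ _).prod (isCompact_stdSimplex _ _)).image hΦ2cont).totallyBounded
  obtain ⟨t, htsub, htfin, htcov⟩ := totallyBounded_iff_subset.mp hSStb
    { q | dist q.1 q.2 < θ/4 } (Metric.dist_mem_uniformity (by positivity))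
  set F : Finset (Fin (4*a+1) → ℝ) := htfin.toFinset with hFdef
  -- representative values
  set val : (Fin (4*a+1) → ℝ) → ℝ := fun y =>
    if hy : y ∈ SS then f hy.choose hy.choose_spec.choose else 0 with hvaldef
  set lam : (Fin (4*a+1) → ℝ) → (Fin (4*a+1) → ℝ) → ℝ :=
    fun y s => max (θ/2 - dist s y) 0 with hlamdef
  have hlam0 : ∀ y s, 0 ≤ lam y s := fun y s => le_max_right _ _
  set ρ : (Fin (4*a+1) → ℝ) → ℝ := fun s =>
    (∑ y ∈ F, lam y s * val y) / max (∑ y ∈ F, lam y s) (θ/8) with hρdef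
  have hρcont : Continuous ρ := by
    apply Continuous.div
    · apply continuous_finset_sum
      intro y _
      apply Continuous.mul _ continuous_const
      simp only [hlamdef]
      exact (continuous_const.sub (Continuous.dist continuous_id continuous_const)).max
        continuous_const
    · apply Continuous.max _ continuous_const
      apply continuous_finset_sum
      intro y _
      simp only [hlamdef]
      exact (continuous_const.sub (Continuous.dist continuous_id continuous_const)).max
        continuous_const
    · intro s
      have : (0:ℝ) < θ/8 := by linarith
      exact ne_of_gt (lt_of_lt_of_le this (le_max_right _ _))
  refine ⟨hfun, WassAux.phiFun a, ρ, hhcont, WassAux.phiFun_continuous a, hρcont, ?_⟩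
  intro A B hAw hAn hBw hBn
  set s : Fin (4*a+1) → ℝ := WassAux.phiFun a (∑ i, A.w i • hfun (A.pts i))
    + WassAux.phiFun a (∑ i, B.w i • hfun (B.pts i)) with hsdef
  have hsdef' : s = WassAux.phiFun a (mvec A) + WassAux.phiFun a (mvec B) := rfl
  have hsSS : s ∈ SS := ⟨A, B, hAw, hAn, hBw, hBn, rfl⟩
  obtain ⟨y₀, hy₀t, hy₀d⟩ := Set.mem_iUnion₂.mp (htcov hsSS)
  have hy₀d' : dist s y₀ < θ/4 := hy₀d
  have hy₀F : y₀ ∈ F := htfin.mem_toFinset.mpr hy₀t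
  set W : ℝ := ∑ y ∈ F, lam y s with hWdef
  have hWge : θ/4 ≤ W := by
    have h1 : θ/4 ≤ lam y₀ s := by
      simp only [hlamdef]
      have : θ/4 ≤ θ/2 - dist s y₀ := by linarith
      exact le_trans this (le_max_left _ _)
    exact le_trans h1 (Finset.single_le_sum (fun y _ => hlam0 y s) hy₀F)
  have hWpos : 0 < W := lt_of_lt_of_le (by linarith) hWge
  have hρs : ρ s = (∑ y ∈ F, lam y s * val y) / W := by
    simp only [hρdef]
    rw [max_eq_left (by rw [← hWdef]; linarith)]
  -- pointwise bound on active terms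
  have hterm : ∀ y ∈ F, lam y s * |f A B - val y| ≤ lam y s * (ε/2) := by
    intro y hyF
    rcases eq_or_lt_of_le (hlam0 y s) with h0 | h0
    · rw [← h0, zero_mul, zero_mul]
    · have hydist : dist s y < θ/2 := by
        simp only [hlamdef] at h0
        rcases lt_max_iff.mp h0 with h | h
        · linarith
        · exact absurd h (lt_irrefl 0)
      have hySS : y ∈ SS := htsub (htfin.mem_toFinset.mp hyF)
      have hval : val y = f hySS.choose hySS.choose_spec.choose := by
        simp only [hvaldef]
        rw [dif_pos hySS]
      set A' := hySS.choose with hA'def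
      set B' := hySS.choose_spec.choose with hB'def
      obtain ⟨hA'w, hA'n, hB'w, hB'n, hyeq⟩ := hySS.choose_spec.choose_spec
      have hΦdist : dist (WassAux.phiFun a (mvec A) + WassAux.phiFun a (mvec B))
          (WassAux.phiFun a (mvec A') + WassAux.phiFun a (mvec B')) < θ := by
        rw [← hyeq, ← hsdef']
        linarith
      rcases hmod (mvec A) (mvec B) (mvec A') (mvec B') (hmv_mem A hAw) (hmv_mem B hBw)
          (hmv_mem A' hA'w) (hmv_mem B' hB'w) hΦdist with ⟨d1, d2⟩ | ⟨d1, d2⟩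
      · have hWA := hWpbound A A' hAw hA'w d1
        have hWB := hWpbound B B' hBw hB'w d2
        have hless := hfu A A' B B' hAw hAn hA'w hA'n hBw hBn hB'w hB'n (by linarith)
        rw [hval]
        exact mul_le_mul_of_nonneg_left (le_of_lt hless) (hlam0 y s)
      · have hWA := hWpbound A B' hAw hB'w d1
        have hWB := hWpbound B A' hBw hA'w d2
        have hless := hfu A B' B A' hAw hAn hB'w hB'n hBw hBn hA'w hA'n (by linarith)
        rw [hval, hf_symm A' B' hA'w hA'n hB'w hB'n]
        exact mul_le_mul_of_nonneg_left (le_of_lt hless) (hlam0 y s)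
  have hnum : (f A B - ρ s) * W = ∑ y ∈ F, lam y s * (f A B - val y) := by
    have hrhs : ∑ y ∈ F, lam y s * (f A B - val y)
        = W * f A B - ∑ y ∈ F, lam y s * val y := by
      rw [Finset.sum_congr rfl fun y _ => mul_sub (lam y s) (f A B) (val y),
        Finset.sum_sub_distrib, ← Finset.sum_mul]
    rw [hrhs, hρs, sub_mul, div_mul_cancel₀ _ (ne_of_gt hWpos)]
    ring
  have habsle : |f A B - ρ s| ≤ ε/2 := by
    have h1 : |f A B - ρ s| * W ≤ (ε/2) * W := by
      calc |f A B - ρ s| * W = |(f A B - ρ s) * W| := by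
            rw [abs_mul, abs_of_pos hWpos]
        _ = |∑ y ∈ F, lam y s * (f A B - val y)| := by rw [hnum]
        _ ≤ ∑ y ∈ F, |lam y s * (f A B - val y)| := Finset.abs_sum_le_sum_abs _ _
        _ = ∑ y ∈ F, lam y s * |f A B - val y| := by
            apply Finset.sum_congr rfl
            intro y _
            rw [abs_mul, abs_of_nonneg (hlam0 y s)]
        _ ≤ ∑ y ∈ F, lam y s * (ε/2) := Finset.sum_le_sum hterm
        _ = W * (ε/2) := by rw [← Finset.sum_mul]
        _ = (ε/2) * W := mul_comm _ _
    exact le_of_mul_le_mul_right h1 hWpos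
  show |f A B - ρ s| < ε
  linarith [habsle]
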